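/- For every x ∈ I_β and every n ∈ ℕ, the number of admissible prefixes of β-expansions of x is given by 𝒩ₙ(x;β) = ∫_Ω 2^{h(ω,x,n)} dm(ω), where h(ω,x,n) = #{0 ≤ i ≤ n−1 : π₂(K_β^i(ω,x)) ∈ S}. -/

import Mathlib

open MeasureTheory Set Filter
open scoped Classical ENNReal

namespace RandomBeta

noncomputable section

/-- The left shift on `{0,1}^ℕ`. -/
def shift (ω : ℕ → Bool) : ℕ → Bool := fun n => ω (n + 1)

/-- The digit complementation `ω̄ᵢ = 1 - ωᵢ`. -/
def compSeq (ω : ℕ → Bool) : ℕ → Bool := fun n => !(ω n)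

/-- The interval `I_β = [0, 1/(β-1)]`. -/
def Ibeta (β : ℝ) : Set ℝ := Set.Icc 0 (1 / (β - 1))

/-- `L = [0, 1/β)`. -/
def Lset (β : ℝ) : Set ℝ := Set.Ico 0 (1 / β)

/-- `S = [1/β, 1/(β(β-1))]`. -/
def Sset (β : ℝ) : Set ℝ := Set.Icc (1 / β) (1 / (β * (β - 1)))

/-- `R = (1/(β(β-1)), 1/(β-1)]`. -/
def Rset (β : ℝ) : Set ℝ := Set.Ioc (1 / (β * (β - 1))) (1 / (β - 1))

/-- The digit produced at the point `x` when the coin shows `a`: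
`0` on `L`, `a` on `S`, `1` on `R`. -/
def digitB (β x : ℝ) (a : Bool) : Bool :=
  if x < 1 / β then false else if x ≤ 1 / (β * (β - 1)) then a else true

/-- One step of the random β-transformation on the second coordinate:
`T₀ x = βx` on `L`, `T_a x` on `S`, `T₁ x = βx - 1` on `R`. -/
def rStep (β x : ℝ) (a : Bool) : ℝ := β * x - (if digitB β x a then 1 else 0)

/-- The random β-transformation in skew-product form. -/
def Rmap (β : ℝ) (p : (ℕ → Bool) × ℝ) : (ℕ → Bool) × ℝ :=
  (shift p.1, rStep β p.2 (p.1 0))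

/-- The random β-transformation `K_β` (shifting `ω` only on `S`). -/
def Kmap (β : ℝ) (p : (ℕ → Bool) × ℝ) : (ℕ → Bool) × ℝ :=
  if p.2 < 1 / β then (p.1, β * p.2)
  else if p.2 ≤ 1 / (β * (β - 1)) then (shift p.1, β * p.2 - (if p.1 0 then 1 else 0))
  else (p.1, β * p.2 - 1)

/-- `R^n_{β,w}(x)`: the second coordinate of `R_β^n (ω, x)` for any `ω` starting with `w`. -/
def rItin (β x : ℝ) (w : List Bool) : ℝ := w.foldl (rStep β) x

/-- `r(w) = R^n_{β,w}(1)`. -/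
def rW (β : ℝ) (w : List Bool) : ℝ := rItin β 1 w

/-- The (unnormalised) density `ρ*_β`. -/
def rhoStar (β x : ℝ) : ℝ :=
  ∑' n : ℕ, ((2 * β) ^ n)⁻¹ * ∑ w : Fin n → Bool,
    ((Set.Icc (0 : ℝ) (rW β (List.ofFn w))).indicator 1 x
      + (Set.Icc (rItin β (1 / (β - 1) - 1) (List.ofFn w)) (1 / (β - 1))).indicator 1 x)

/-- `m` is the `(1/2, 1/2)` Bernoulli measure on `{0,1}^ℕ`. -/
def IsBernoulliHalf (m : Measure (ℕ → Bool)) : Prop :=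
  IsProbabilityMeasure m ∧
    ∀ (n : ℕ) (w : Fin n → Bool), m {ω | ∀ i : Fin n, ω i = w i} = (2 : ℝ≥0∞)⁻¹ ^ n

/-- The probability measure `μ_β` on `I_β` with density `ρ*_β / ∫ ρ*_β` w.r.t. Lebesgue. -/
def muBeta (β : ℝ) : Measure ℝ :=
  (volume.restrict (Ibeta β)).withDensity
    (fun x => ENNReal.ofReal (rhoStar β x / ∫ y in Ibeta β, rhoStar β y))

/-- `l(w) = Σ ωᵢ 2^(i-1)`. -/
def lVal : List Bool → ℕ
  | [] => 0
  | a :: t => (if a then 1 else 0) + 2 * lVal t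

/-- `v(w) = Σ_{k<n} β^(-k) + l(w)/(2β)^n`. -/
def vVal (β : ℝ) (w : List Bool) : ℝ :=
  (∑ k ∈ Finset.range w.length, ((β : ℝ) ^ k)⁻¹) + (lVal w : ℝ) / (2 * β) ^ w.length

/-- The sublevel `E_w = Ω × [0, r(w)] × [v(w), v(w) + (2β)^(-n))` of the tower. -/
def Eset (β : ℝ) (w : List Bool) : Set ((ℕ → Bool) × ℝ × ℝ) :=
  {p | p.2.1 ∈ Set.Icc 0 (rW β w) ∧
    p.2.2 ∈ Set.Ico (vVal β w) (vVal β w + ((2 * β) ^ w.length)⁻¹)}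

/-- The tower `E`. -/
def Etower (β : ℝ) : Set ((ℕ → Bool) × ℝ × ℝ) := ⋃ w : List Bool, Eset β w

/-- The step from `w` to `wa` is of type `T₁`. -/
def stepT1 (β : ℝ) (w : List Bool) (a : Bool) : Prop := digitB β (rW β w) a = true

/-- `C₁(wa) = v(wa) - v(w)/(2β)`. -/
def C1 (β : ℝ) (w : List Bool) (a : Bool) : ℝ := vVal β (w ++ [a]) - vVal β w / (2 * β)

/-- `C₂(wa) = 1/(2β) + Σ (2β)^(-(m+1)) - v(w)/(2β)`, summing over pairs `(u, b)` with
the step `u → ub` of type `T₁` and `v(u) < v(w)`. -/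
def C2 (β : ℝ) (w : List Bool) : ℝ :=
  (2 * β)⁻¹ +
    (∑' u : {q : List Bool × Bool // stepT1 β q.1 q.2 ∧ vVal β q.1 < vVal β w},
      ((2 * β) ^ (u.1.1.length + 1))⁻¹) - vVal β w / (2 * β)

/-- The action of `ψ` on points of the sublevel `E_w`. -/
def psiAux (β : ℝ) (w : List Bool) (p : (ℕ → Bool) × ℝ × ℝ) : (ℕ → Bool) × ℝ × ℝ :=
  if digitB β (rW β w) (p.1 0) then
    if p.2.1 < 1 / β then (shift p.1, β * p.2.1, p.2.2 / (2 * β) + C2 β w)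
    else (shift p.1, β * p.2.1 - 1, p.2.2 / (2 * β) + C1 β w (p.1 0))
  else (shift p.1, β * p.2.1, p.2.2 / (2 * β) + C1 β w (p.1 0))

/-- The tower map `ψ : E → E` (the identity off the tower). -/
def psi (β : ℝ) (p : (ℕ → Bool) × ℝ × ℝ) : (ℕ → Bool) × ℝ × ℝ :=
  if h : ∃ w : List Bool, p ∈ Eset β w then psiAux β h.choose p else p

/-- The reflection `P(ω, x, y) = (ω̄, 1/(β-1) - x, -y)`. -/
def Pmap (β : ℝ) (p : (ℕ → Bool) × ℝ × ℝ) : (ℕ → Bool) × ℝ × ℝ :=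
  (compSeq p.1, 1 / (β - 1) - p.2.1, -p.2.2)

/-- The reflected tower `Ē = P(E)`. -/
def Ebar (β : ℝ) : Set ((ℕ → Bool) × ℝ × ℝ) := Pmap β '' Etower β

/-- The exceptional set `F_w ⊆ E_w` (empty unless `r(w) ∈ R`). -/
def Fset (β : ℝ) (w : List Bool) : Set ((ℕ → Bool) × ℝ × ℝ) :=
  {p | p ∈ Eset β w ∧ p.1 0 = false ∧ p.2.1 ∈ Sset β ∧ rW β w ∈ Rset β}

/-- The swap map `Q` interchanging `ψ(F_w)` with `ψ(F̄_w̄) = P(ψ(F_w))`. -/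
def Qmap (β : ℝ) (p : (ℕ → Bool) × ℝ × ℝ) : (ℕ → Bool) × ℝ × ℝ :=
  if ∃ w : List Bool, p ∈ psi β '' Fset β w then (p.1, p.2.1 + 1, -p.2.2)
  else if ∃ w : List Bool, p ∈ Pmap β '' (psi β '' Fset β w) then (p.1, p.2.1 - 1, -p.2.2)
  else p

/-- `ψ` extended to `E ∪ Ē`, acting by `P ∘ ψ ∘ P⁻¹` on `Ē`. -/
def psiFull (β : ℝ) (p : (ℕ → Bool) × ℝ × ℝ) : (ℕ → Bool) × ℝ × ℝ :=
  if p ∈ Etower β then psi β p else Pmap β (psi β (Pmap β p))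

/-- The corrected tower map `ψ̃ = Q ∘ ψ`. -/
def psiTilde (β : ℝ) : ((ℕ → Bool) × ℝ × ℝ) → ((ℕ → Bool) × ℝ × ℝ) :=
  Qmap β ∘ psiFull β

/-- `h(ω, x, n) = #{0 ≤ i ≤ n-1 : π₂(K_β^i(ω,x)) ∈ S}`. -/
def hCount (β : ℝ) (ω : ℕ → Bool) (x : ℝ) (n : ℕ) : ℕ :=
  ((Finset.range n).filter (fun i => ((Kmap β)^[i] (ω, x)).2 ∈ Sset β)).card

/-- `π_β(a) = Σ aᵢ β^(-(i+1))`. -/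
def piB (β : ℝ) (a : ℕ → Bool) : ℝ :=
  ∑' i : ℕ, (if a i then (1 : ℝ) else 0) * ((β : ℝ) ^ (i + 1))⁻¹

/-- `𝒩ₙ(x; β)`: the number of words of length `n` extendable to a β-expansion of `x`. -/
def Ncount (β x : ℝ) (n : ℕ) : ℕ :=
  {a : Fin n → Bool | ∃ b : ℕ → Bool, (∀ i : Fin n, b i = a i) ∧ x = piB β b}.ncard

end
noncomputable section Aux

variable {β : ℝ}

/-- Remainder sequence of `x` under digits `b`. -/
def remSeq (β x : ℝ) (b : ℕ → Bool) : ℕ → ℝ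
  | 0 => x
  | k+1 => β * remSeq β x b k - (if b k then 1 else 0)

/-- The digit produced at step `i` of the orbit of `p` under `Kmap`. -/
def aDig (β : ℝ) (p : (ℕ → Bool) × ℝ) (i : ℕ) : Bool :=
  digitB β ((Kmap β)^[i] p).2 (((Kmap β)^[i] p).1 0)

/-- Number of `S`-visits of the remainder sequence. -/
def hAdm (β x : ℝ) (b : ℕ → Bool) (n : ℕ) : ℕ :=
  ((Finset.range n).filter (fun k => remSeq β x b k ∈ Sset β)).card

lemma remSeq_congr {x : ℝ} {b b' : ℕ → Bool} :
    ∀ {k : ℕ}, (∀ j < k, b j = b' j) → remSeq β x b k = remSeq β x b' k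
  | 0, _ => rfl
  | k+1, h => by
    simp only [remSeq, remSeq_congr (fun j hj => h j (Nat.lt_succ_of_lt hj)),
      h k (Nat.lt_succ_self k)]

lemma remSeq_shift {x : ℝ} {b : ℕ → Bool} :
    ∀ k, remSeq β (remSeq β x b 1) (fun i => b (i+1)) k = remSeq β x b (k+1)
  | 0 => rfl
  | k+1 => by
    show β * remSeq β (remSeq β x b 1) (fun i => b (i+1)) k - (if b (k+1) then 1 else 0) = _
    rw [remSeq_shift k]; rfl

lemma Kmap_snd (p : (ℕ → Bool) × ℝ) :
    (Kmap β p).2 = β * p.2 - (if digitB β p.2 (p.1 0) then 1 else 0) := by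
  unfold Kmap digitB
  by_cases h1 : p.2 < 1/β
  · rw [if_pos h1, if_pos h1]; simp
  · rw [if_neg h1, if_neg h1]
    by_cases h2 : p.2 ≤ 1/(β*(β-1))
    · rw [if_pos h2, if_pos h2]
    · rw [if_neg h2, if_neg h2]; simp

lemma aDig_succ (p : (ℕ → Bool) × ℝ) (i : ℕ) :
    aDig β p (i+1) = aDig β (Kmap β p) i := by
  simp only [aDig, Function.iterate_succ_apply]

lemma remSeq_aDig (p : (ℕ → Bool) × ℝ) :
    ∀ i, remSeq β p.2 (aDig β p) i = ((Kmap β)^[i] p).2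
  | 0 => rfl
  | i+1 => by
    rw [Function.iterate_succ_apply', Kmap_snd]
    simp only [remSeq, remSeq_aDig p i, aDig]
    congr

lemma Kmap_snd_mem (hβ : 1 < β) (hβ2 : β < 2) {p : (ℕ → Bool) × ℝ}
    (hp : p.2 ∈ Ibeta β) : (Kmap β p).2 ∈ Ibeta β := by
  have hb0 : (0:ℝ) < β := by linarith
  have hb1 : (0:ℝ) < β - 1 := by linarith
  have hbb : (0:ℝ) < β * (β - 1) := by positivity
  have key : β * (1/(β*(β-1))) = 1/(β-1) := by field_simp
  have hone : (1:ℝ) ≤ 1/(β-1) := by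
    rw [le_div_iff₀ hb1]; linarith
  simp only [Ibeta, Set.mem_Icc] at hp ⊢
  obtain ⟨hp0, hp1⟩ := hp
  rw [Kmap_snd]
  by_cases h1 : p.2 < 1/β
  · simp only [digitB, if_pos h1]
    simp only [Bool.false_eq_true, if_false, sub_zero]
    have : β * p.2 < β * (1/β) := mul_lt_mul_of_pos_left h1 hb0
    rw [mul_one_div_cancel (ne_of_gt hb0)] at this
    constructor
    · positivity
    · linarith
  · push_neg at h1
    by_cases h2 : p.2 ≤ 1/(β*(β-1))
    · simp only [digitB, if_neg (not_lt.mpr h1), if_pos h2]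
      have hlow : 1 ≤ β * p.2 := by
        have := mul_le_mul_of_nonneg_left h1 (le_of_lt hb0)
        rwa [mul_one_div_cancel (ne_of_gt hb0)] at this
      have hhigh : β * p.2 ≤ 1/(β-1) := by
        have := mul_le_mul_of_nonneg_left h2 (le_of_lt hb0)
        rwa [key] at this
      cases hc : (p.1 0)
      · simp only [Bool.false_eq_true, if_false, sub_zero]
        exact ⟨by linarith, by linarith⟩
      · simp only [if_true]
        exact ⟨by linarith, by linarith⟩
    · push_neg at h2
      simp only [digitB, if_neg (not_lt.mpr h1), if_neg (not_le.mpr h2), if_pos]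
      have hlow : 1/(β-1) < β * p.2 := by
        have := mul_lt_mul_of_pos_left h2 hb0
        rwa [key] at this
      have hhigh : β * p.2 ≤ β * (1/(β-1)) := mul_le_mul_of_nonneg_left hp1 (le_of_lt hb0)
      have : β * (1/(β-1)) = 1/(β-1) + 1 := by field_simp; ring
      exact ⟨by linarith, by linarith⟩

lemma Kiter_snd_mem (hβ : 1 < β) (hβ2 : β < 2) {p : (ℕ → Bool) × ℝ}
    (hp : p.2 ∈ Ibeta β) : ∀ i, ((Kmap β)^[i] p).2 ∈ Ibeta β
  | 0 => hp
  | i+1 => by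
    rw [Function.iterate_succ_apply']
    exact Kmap_snd_mem hβ hβ2 (Kiter_snd_mem hβ hβ2 hp i)

end Aux
noncomputable section Aux2

variable {β : ℝ}

lemma summable_geom_inv (hβ : 1 < β) :
    Summable (fun i : ℕ => ((β:ℝ)^(i+1))⁻¹) := by
  have h0 : (0:ℝ) < β := by linarith
  have : Summable (fun i : ℕ => (β⁻¹:ℝ)^i) :=
    summable_geometric_of_lt_one (by positivity) (inv_lt_one_of_one_lt₀ hβ)
  have := this.mul_left β⁻¹
  refine this.congr fun i => ?_
  rw [← pow_succ', inv_pow]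

lemma summable_piB (hβ : 1 < β) (a : ℕ → Bool) :
    Summable (fun i : ℕ => (if a i then (1:ℝ) else 0) * ((β:ℝ)^(i+1))⁻¹) := by
  have h0 : (0:ℝ) < β := by linarith
  refine Summable.of_nonneg_of_le (fun i => ?_) (fun i => ?_) (summable_geom_inv hβ)
  · split_ifs <;> simp <;> positivity
  · have : (0:ℝ) ≤ ((β:ℝ)^(i+1))⁻¹ := by positivity
    split_ifs <;> simp [this]

lemma tsum_geom_inv (hβ : 1 < β) :
    (∑' i : ℕ, ((β:ℝ)^(i+1))⁻¹) = 1/(β-1) := by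
  have h0 : (0:ℝ) < β := by linarith
  have h1 : (0:ℝ) < β - 1 := by linarith
  have hcongr : ∀ i : ℕ, ((β:ℝ)^(i+1))⁻¹ = β⁻¹ * (β⁻¹)^i := by
    intro i; rw [← inv_pow, pow_succ']
  rw [tsum_congr hcongr, tsum_mul_left,
    tsum_geometric_of_lt_one (by positivity) (inv_lt_one_of_one_lt₀ hβ)]
  rw [show (1:ℝ) - β⁻¹ = (β-1)/β by field_simp]
  field_simp

lemma piB_mem (hβ : 1 < β) (a : ℕ → Bool) : piB β a ∈ Ibeta β := by
  have h0 : (0:ℝ) < β := by linarith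
  constructor
  · refine tsum_nonneg fun i => ?_
    split_ifs <;> simp <;> positivity
  · rw [← tsum_geom_inv hβ]
    refine Summable.tsum_le_tsum (fun i => ?_) (summable_piB hβ a) (summable_geom_inv hβ)
    have : (0:ℝ) ≤ ((β:ℝ)^(i+1))⁻¹ := by positivity
    split_ifs <;> simp [this]

lemma piB_shift (hβ : 1 < β) (a : ℕ → Bool) :
    piB β a = (if a 0 then (1:ℝ) else 0) * β⁻¹ + β⁻¹ * piB β (shift a) := by
  have h0 : (0:ℝ) < β := by linarith
  unfold piB
  rw [Summable.tsum_eq_zero_add (summable_piB hβ a)]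
  congr 1
  · rw [pow_one]
  · rw [← tsum_mul_left]
    refine tsum_congr fun i => ?_
    show (if a (i+1) then (1:ℝ) else 0) * ((β:ℝ)^(i+1+1))⁻¹
      = β⁻¹ * ((if shift a i then (1:ℝ) else 0) * ((β:ℝ)^(i+1))⁻¹)
    rw [shift, pow_succ, mul_inv]
    ring

lemma piB_split (hβ : 1 < β) (a : ℕ → Bool) :
    ∀ n : ℕ, piB β a = (∑ i ∈ Finset.range n,
        (if a i then (1:ℝ) else 0) * ((β:ℝ)^(i+1))⁻¹)
      + ((β:ℝ)^n)⁻¹ * piB β (fun i => a (i+n))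
  | 0 => by simp
  | n+1 => by
    have h0 : (β:ℝ) ≠ 0 := by positivity
    rw [piB_split hβ a n, Finset.sum_range_succ]
    have hsh : shift (fun i => a (i+n)) = fun i => a (i+(n+1)) := by
      funext i; simp [shift]; congr 1; omega
    rw [piB_shift hβ (fun i => a (i+n)), hsh]
    simp only [zero_add]
    rw [pow_succ, mul_inv]
    ring

lemma remSeq_formula (hβ : 1 < β) (x : ℝ) (b : ℕ → Bool) :
    ∀ n : ℕ, x = (∑ i ∈ Finset.range n,
        (if b i then (1:ℝ) else 0) * ((β:ℝ)^(i+1))⁻¹)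
      + ((β:ℝ)^n)⁻¹ * remSeq β x b n
  | 0 => by simp [remSeq]
  | n+1 => by
    have h0 : (β:ℝ) ≠ 0 := by positivity
    have hpow : ((β:ℝ)^n) ≠ 0 := pow_ne_zero _ h0
    rw [Finset.sum_range_succ,
      show remSeq β x b (n+1) = β * remSeq β x b n - (if b n then (1:ℝ) else 0) from rfl]
    conv_lhs => rw [remSeq_formula hβ x b n]
    rw [pow_succ, mul_inv]
    field_simp
    ring

lemma rem_eq_piB (hβ : 1 < β) {x : ℝ} {b : ℕ → Bool} (hx : x = piB β b) (n : ℕ) :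
    remSeq β x b n = piB β (fun i => b (i+n)) := by
  have h0 : (β:ℝ) ≠ 0 := by positivity
  have h1 := remSeq_formula hβ x b n
  have h2 := piB_split hβ b n
  rw [← hx] at h2
  have := h1.symm.trans h2
  have h3 := add_left_cancel this
  exact mul_left_cancel₀ (inv_ne_zero (pow_ne_zero _ h0)) h3

/-- greedy-type step. -/
def gStep (β z : ℝ) : ℝ := β * z - (if 1/β ≤ z then 1 else 0)

def gOrb (β y : ℝ) (k : ℕ) : ℝ := (gStep β)^[k] y

def gDig (β y : ℝ) (i : ℕ) : Bool := if 1/β ≤ gOrb β y i then true else false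

lemma remSeq_gDig (y : ℝ) : ∀ k, remSeq β y (gDig β y) k = gOrb β y k
  | 0 => rfl
  | k+1 => by
    have hstep : gOrb β y (k+1) = β * gOrb β y k - (if 1/β ≤ gOrb β y k then 1 else 0) := by
      rw [gOrb, Function.iterate_succ_apply']; rfl
    show β * remSeq β y (gDig β y) k - (if gDig β y k then (1:ℝ) else 0) = _
    rw [remSeq_gDig y k, hstep, gDig]
    congr 1
    split_ifs <;> simp_all

lemma gOrb_mem (hβ : 1 < β) (hβ2 : β < 2) {y : ℝ} (hy : y ∈ Ibeta β) :
    ∀ k, gOrb β y k ∈ Ibeta β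
  | 0 => hy
  | k+1 => by
    have h0 : (0:ℝ) < β := by linarith
    have h1 : (0:ℝ) < β - 1 := by linarith
    have hone : (1:ℝ) ≤ 1/(β-1) := by rw [le_div_iff₀ h1]; linarith
    have ih := gOrb_mem hβ hβ2 hy k
    simp only [Ibeta, Set.mem_Icc] at ih ⊢
    rw [gOrb, Function.iterate_succ_apply', ← gOrb, gStep]
    have hb : β * (1/(β-1)) = 1/(β-1) + 1 := by field_simp; ring
    split_ifs with h
    · have : 1 ≤ β * gOrb β y k := by
        have := mul_le_mul_of_nonneg_left h (le_of_lt h0)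
        rwa [mul_one_div_cancel (ne_of_gt h0)] at this
      have : β * gOrb β y k ≤ β * (1/(β-1)) :=
        mul_le_mul_of_nonneg_left ih.2 (le_of_lt h0)
      constructor
      · have := mul_le_mul_of_nonneg_left h (le_of_lt h0)
        rw [mul_one_div_cancel (ne_of_gt h0)] at this
        linarith
      · linarith [hb]
    · push_neg at h
      have : β * gOrb β y k < β * (1/β) := mul_lt_mul_of_pos_left h h0
      rw [mul_one_div_cancel (ne_of_gt h0)] at this
      constructor
      · have := mul_nonneg (le_of_lt h0) ih.1; linarith
      · linarith

lemma exists_expansion (hβ : 1 < β) (hβ2 : β < 2) {y : ℝ} (hy : y ∈ Ibeta β) :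
    ∃ c : ℕ → Bool, y = piB β c := by
  have h0 : (0:ℝ) < β := by linarith
  have h1 : (0:ℝ) < β - 1 := by linarith
  refine ⟨gDig β y, ?_⟩
  have key : ∀ k : ℕ, |y - piB β (gDig β y)| ≤ ((β:ℝ)⁻¹)^k * (1/(β-1)) := by
    intro k
    have hf := remSeq_formula hβ y (gDig β y) k
    have hs := piB_split hβ (gDig β y) k
    have hd : y - piB β (gDig β y)
        = ((β:ℝ)^k)⁻¹ * (remSeq β y (gDig β y) k - piB β (fun i => gDig β y (i+k))) := by
      linear_combination hf - hs
    rw [hd, abs_mul, abs_inv, abs_pow, abs_of_pos h0, inv_pow]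
    refine mul_le_mul_of_nonneg_left ?_ (by positivity)
    have hr : remSeq β y (gDig β y) k ∈ Ibeta β := by
      rw [remSeq_gDig]; exact gOrb_mem hβ hβ2 hy k
    have hp : piB β (fun i => gDig β y (i+k)) ∈ Ibeta β := piB_mem hβ _
    simp only [Ibeta, Set.mem_Icc] at hr hp
    rw [abs_le]
    constructor <;> [linarith [hr.1, hp.2]; linarith [hr.2, hp.1]]
  have htend : Tendsto (fun k : ℕ => ((β:ℝ)⁻¹)^k * (1/(β-1))) atTop (nhds 0) := by
    have := tendsto_pow_atTop_nhds_zero_of_lt_one (by positivity : (0:ℝ) ≤ β⁻¹)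
      (inv_lt_one_of_one_lt₀ hβ)
    simpa using this.mul_const (1/(β-1))
  have habs : |y - piB β (gDig β y)| ≤ 0 :=
    ge_of_tendsto htend (Filter.Eventually.of_forall key)
  have := abs_nonneg (y - piB β (gDig β y))
  have : |y - piB β (gDig β y)| = 0 := le_antisymm habs this
  have := abs_eq_zero.mp this
  linarith [sub_eq_zero.mp this]

/-- extension of a finite word by `false`s. -/
def extF {n : ℕ} (a : Fin n → Bool) : ℕ → Bool :=
  fun i => if h : i < n then a ⟨i, h⟩ else false

lemma claimD (hβ : 1 < β) (hβ2 : β < 2) {n : ℕ} (a : Fin n → Bool) {x : ℝ}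
    (hx : x ∈ Ibeta β) :
    (∃ b : ℕ → Bool, (∀ i : Fin n, b i = a i) ∧ x = piB β b)
      ↔ ∀ k ≤ n, remSeq β x (extF a) k ∈ Ibeta β := by
  constructor
  · rintro ⟨b, hb, hxb⟩ k hk
    have hcongr : remSeq β x (extF a) k = remSeq β x b k := by
      refine remSeq_congr fun j hj => ?_
      have hjn : j < n := lt_of_lt_of_le hj hk
      rw [extF]; rw [dif_pos hjn]
      exact (hb ⟨j, hjn⟩).symm
    rw [hcongr, rem_eq_piB hβ hxb k]
    exact piB_mem hβ _
  · intro h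
    obtain ⟨c, hc⟩ := exists_expansion hβ hβ2 (h n le_rfl)
    set b : ℕ → Bool := fun i => if hi : i < n then a ⟨i, hi⟩ else c (i - n) with hbdef
    have htail : (fun i => b (i+n)) = c := by
      funext i
      simp only [hbdef]
      rw [dif_neg (by omega)]
      congr 1; omega
    have hbe : ∀ j < n, extF a j = b j := by
      intro j hj
      simp only [extF, hbdef, dif_pos hj]
    have hrn : remSeq β x b n = piB β (fun i => b (i+n)) := by
      rw [htail, ← hc]
      exact (remSeq_congr hbe).symm
    refine ⟨b, fun i => ?_, ?_⟩
    · simp only [hbdef, dif_pos i.isLt]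
    · rw [remSeq_formula hβ x b n, piB_split hβ b n, hrn]
  
end Aux2
noncomputable section Aux3

variable {β : ℝ}

lemma aDig_zero (ω : ℕ → Bool) (x : ℝ) : aDig β (ω, x) 0 = digitB β x (ω 0) := rfl

lemma hAdm_succ (x : ℝ) (b : ℕ → Bool) (n : ℕ) :
    hAdm β x b (n+1) = hAdm β (remSeq β x b 1) (fun i => b (i+1)) n
      + (if x ∈ Sset β then 1 else 0) := by
  unfold hAdm
  rw [Finset.card_filter, Finset.card_filter, Finset.sum_range_succ']
  congr 1
  refine Finset.sum_congr rfl fun k _ => ?_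
  rw [remSeq_shift]

lemma cyl (hβ : 1 < β) (hβ2 : β < 2) :
    ∀ (n : ℕ) (x : ℝ) (b : ℕ → Bool), x ∈ Ibeta β →
      (∀ k ≤ n, remSeq β x b k ∈ Ibeta β) →
      ∃ (k : ℕ) (w : Fin k → Bool), k = hAdm β x b n ∧
        {ω : ℕ → Bool | ∀ i < n, aDig β (ω, x) i = b i}
          = {ω : ℕ → Bool | ∀ j : Fin k, ω j = w j} := by
  intro n
  induction n with
  | zero =>
    intro x b _ _
    refine ⟨0, (fun j => false), by simp [hAdm], ?_⟩
    ext ω; simp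
  | succ n ih =>
    intro x b hx hrem
    have h0 : (0:ℝ) < β := by linarith
    have h1 : (0:ℝ) < β - 1 := by linarith
    have hbb : (0:ℝ) < β * (β-1) := by positivity
    have key : β * (1/(β*(β-1))) = 1/(β-1) := by field_simp
    have hx'mem : remSeq β x b 1 ∈ Ibeta β := hrem 1 (by omega)
    have hrem' : ∀ k ≤ n, remSeq β (remSeq β x b 1) (fun i => b (i+1)) k ∈ Ibeta β := by
      intro k hk; rw [remSeq_shift]; exact hrem (k+1) (by omega)
    obtain ⟨k', w', hk', hset'⟩ := ih (remSeq β x b 1) (fun i => b (i+1)) hx'mem hrem'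
    have hx1 : remSeq β x b 1 = β * x - (if b 0 then (1:ℝ) else 0) := by
      show β * remSeq β x b 0 - _ = _; rfl
    by_cases hL : x < 1/β
    · -- Left case: digit forced to be false
      have hb0 : b 0 = false := by
        by_contra hb0
        rw [Bool.not_eq_false] at hb0
        have hmem := hrem 1 (by omega)
        simp only [Ibeta, Set.mem_Icc, hx1, hb0, if_true] at hmem
        have hlt : β * x < 1 := by
          have := mul_lt_mul_of_pos_left hL h0
          rwa [mul_one_div_cancel (ne_of_gt h0)] at this
        linarith [hmem.1]
      have hxeq : remSeq β x b 1 = β * x := by rw [hx1, hb0]; simp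
      have hdig : ∀ ω : ℕ → Bool, aDig β (ω, x) 0 = false := fun ω => by
        rw [aDig_zero, digitB, if_pos hL]
      have hK : ∀ ω : ℕ → Bool, Kmap β (ω, x) = (ω, remSeq β x b 1) := by
        intro ω
        show (if x < 1/β then (ω, β * x) else _) = _
        rw [if_pos hL, hxeq]
      have hS : x ∉ Sset β := by
        intro hc
        exact absurd (Set.mem_Icc.mp hc).1 (not_le.mpr hL)
      have hseteq : {ω : ℕ → Bool | ∀ i < n+1, aDig β (ω, x) i = b i}
          = {ω : ℕ → Bool | ∀ i < n, aDig β (ω, remSeq β x b 1) i = b (i+1)} := by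
        ext ω
        simp only [Set.mem_setOf_eq]
        constructor
        · intro h i hi
          have := h (i+1) (by omega)
          rwa [aDig_succ, hK ω] at this
        · intro h i hi
          cases i with
          | zero => rw [hdig ω, hb0]
          | succ i => rw [aDig_succ, hK ω]; exact h i (by omega)
      refine ⟨k', w', ?_, ?_⟩
      · rw [hAdm_succ, if_neg hS, add_zero, ← hk']
      · rw [hseteq]; exact hset'
    · by_cases hS : x ≤ 1/(β*(β-1))
      · -- Switch case
        have hge : 1/β ≤ x := not_lt.mp hL
        have hxS : x ∈ Sset β := Set.mem_Icc.mpr ⟨hge, hS⟩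
        have hdig : ∀ ω : ℕ → Bool, aDig β (ω, x) 0 = ω 0 := fun ω => by
          rw [aDig_zero, digitB, if_neg hL, if_pos hS]
        have hK : ∀ ω : ℕ → Bool, ω 0 = b 0 →
            Kmap β (ω, x) = (shift ω, remSeq β x b 1) := by
          intro ω hω
          show (if x < 1/β then (ω, β * x)
            else if x ≤ 1/(β*(β-1)) then (shift ω, β * x - (if ω 0 then (1:ℝ) else 0))
            else (ω, β * x - 1)) = _
          rw [if_neg hL, if_pos hS, hω, hx1]
        have hseteq : {ω : ℕ → Bool | ∀ i < n+1, aDig β (ω, x) i = b i}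
            = {ω : ℕ → Bool | ω 0 = b 0 ∧
                ∀ i < n, aDig β (shift ω, remSeq β x b 1) i = b (i+1)} := by
          ext ω
          simp only [Set.mem_setOf_eq]
          constructor
          · intro h
            have h0' : ω 0 = b 0 := by rw [← hdig ω]; exact h 0 (by omega)
            refine ⟨h0', fun i hi => ?_⟩
            have := h (i+1) (by omega)
            rwa [aDig_succ, hK ω h0'] at this
          · rintro ⟨h0', h⟩ i hi
            cases i with
            | zero => rw [hdig ω, h0']
            | succ i => rw [aDig_succ, hK ω h0']; exact h i (by omega)
        refine ⟨k'+1, Fin.cons (b 0) w', ?_, ?_⟩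
        · rw [hAdm_succ, if_pos hxS, ← hk']
        · rw [hseteq]
          ext ω
          simp only [Set.mem_setOf_eq]
          constructor
          · rintro ⟨h0', h⟩ j
            refine Fin.cases ?_ ?_ j
            · simpa using h0'
            · intro i
              have h2 : shift ω ∈ {ω : ℕ → Bool |
                  ∀ i < n, aDig β (ω, remSeq β x b 1) i = b (i+1)} := h
              rw [hset'] at h2
              have := h2 i
              rw [Fin.cons_succ]
              simpa [shift] using this
          · intro h
            constructor
            · simpa using h 0
            · have hmem : ∀ j : Fin k', shift ω j = w' j := fun j => by
                have := h j.succ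
                rw [Fin.cons_succ] at this
                simpa [shift, Fin.val_succ] using this
              have h2 : shift ω ∈ {ω : ℕ → Bool | ∀ j : Fin k', ω j = w' j} := hmem
              rw [← hset'] at h2
              exact h2
      · -- Right case: digit forced to be true
        push_neg at hS
        have hnle : ¬ x ≤ 1/(β*(β-1)) := not_le.mpr hS
        have hb0 : b 0 = true := by
          by_contra hb0
          rw [Bool.not_eq_true] at hb0
          have hmem := hrem 1 (by omega)
          simp only [Ibeta, Set.mem_Icc, hx1, hb0, Bool.false_eq_true, if_false,
            sub_zero] at hmem
          have hgt : 1/(β-1) < β * x := by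
            have := mul_lt_mul_of_pos_left hS h0
            rwa [key] at this
          linarith [hmem.2]
        have hxeq : remSeq β x b 1 = β * x - 1 := by rw [hx1, hb0]; simp
        have hdig : ∀ ω : ℕ → Bool, aDig β (ω, x) 0 = true := fun ω => by
          rw [aDig_zero, digitB, if_neg hL, if_neg hnle]
        have hK : ∀ ω : ℕ → Bool, Kmap β (ω, x) = (ω, remSeq β x b 1) := by
          intro ω
          show (if x < 1/β then (ω, β * x)
            else if x ≤ 1/(β*(β-1)) then (shift ω, β * x - (if ω 0 then (1:ℝ) else 0))
            else (ω, β * x - 1)) = _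
          rw [if_neg hL, if_neg hnle, hxeq]
        have hSx : x ∉ Sset β := by
          intro hc
          exact absurd (Set.mem_Icc.mp hc).2 hnle
        have hseteq : {ω : ℕ → Bool | ∀ i < n+1, aDig β (ω, x) i = b i}
            = {ω : ℕ → Bool | ∀ i < n, aDig β (ω, remSeq β x b 1) i = b (i+1)} := by
          ext ω
          simp only [Set.mem_setOf_eq]
          constructor
          · intro h i hi
            have := h (i+1) (by omega)
            rwa [aDig_succ, hK ω] at this
          · intro h i hi
            cases i with
            | zero => rw [hdig ω, hb0]
            | succ i => rw [aDig_succ, hK ω]; exact h i (by omega)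
        refine ⟨k', w', ?_, ?_⟩
        · rw [hAdm_succ, if_neg hSx, add_zero, ← hk']
        · rw [hseteq]; exact hset'

end Aux3
theorem stmt17' (β : ℝ) (hβ : 1 < β ∧ β < 2) (m : Measure (ℕ → Bool))
    (hm : IsBernoulliHalf m) (x : ℝ) (hx : x ∈ Ibeta β) (n : ℕ) :
    (Ncount β x n : ℝ) = ∫ ω, (2 : ℝ) ^ (hCount β ω x n) ∂m := by
  obtain ⟨hβ1, hβ2⟩ := hβ
  haveI : IsProbabilityMeasure m := hm.1
  set A : Finset (Fin n → Bool) :=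
    Finset.univ.filter (fun a => ∀ k ≤ n, remSeq β x (extF a) k ∈ Ibeta β) with hA
  set C : (Fin n → Bool) → Set (ℕ → Bool) :=
    fun a => {ω | ∀ i < n, aDig β (ω, x) i = extF a i} with hC
  -- Ncount equals the cardinality of A
  have hNA : Ncount β x n = A.card := by
    rw [Ncount, show {a : Fin n → Bool | ∃ b : ℕ → Bool,
        (∀ i : Fin n, b i = a i) ∧ x = piB β b} = ↑A from ?_, Set.ncard_coe_finset]
    ext a
    simp only [Set.mem_setOf_eq, Finset.coe_filter, Finset.mem_univ, true_and, hA]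
    exact claimD hβ1 hβ2 a hx
  -- measurability and measure of the cylinders
  have key : ∀ a ∈ A, MeasurableSet (C a) ∧
      (m (C a)).toReal = (2⁻¹ : ℝ) ^ (hAdm β x (extF a) n) := by
    intro a ha
    rw [hA, Finset.mem_filter] at ha
    obtain ⟨k, w, hk, hset⟩ := cyl hβ1 hβ2 n x (extF a) hx ha.2
    have hCyl : MeasurableSet {ω : ℕ → Bool | ∀ j : Fin k, ω j = w j} := by
      have : {ω : ℕ → Bool | ∀ j : Fin k, ω j = w j}
          = ⋂ j : Fin k, {ω : ℕ → Bool | ω j = w j} := by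
        ext ω; simp
      rw [this]
      refine MeasurableSet.iInter fun j => ?_
      show MeasurableSet ((fun ω : ℕ → Bool => ω (j : ℕ)) ⁻¹' {w j})
      exact (measurable_pi_apply (j : ℕ)) (measurableSet_singleton (w j))
    constructor
    · simp only [hC]
      rw [hset]; exact hCyl
    · simp only [hC]
      rw [hset, hm.2 k w, ← hk]
      simp [ENNReal.toReal_pow, ENNReal.toReal_inv]
  -- the integrand is a finite sum of indicators
  have funeq : (fun ω => (2:ℝ) ^ (hCount β ω x n))
      = fun ω => ∑ a ∈ A, (C a).indicator
          (fun _ => (2:ℝ) ^ (hAdm β x (extF a) n)) ω := by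
    funext ω
    set a0 : Fin n → Bool := fun i => aDig β (ω, x) i with ha0
    have hext : ∀ j < n, extF a0 j = aDig β (ω, x) j := by
      intro j hj
      rw [extF, dif_pos hj]
    have ha0C : ω ∈ C a0 := by
      intro i hi
      exact (hext i hi).symm
    have hrema0 : ∀ k ≤ n, remSeq β x (extF a0) k ∈ Ibeta β := by
      intro k hk
      have hcongr : remSeq β x (extF a0) k = remSeq β x (aDig β (ω, x)) k :=
        remSeq_congr fun j hj => hext j (lt_of_lt_of_le hj hk)
      rw [hcongr, remSeq_aDig (ω, x) k]
      exact Kiter_snd_mem hβ1 hβ2 hx k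
    have ha0A : a0 ∈ A := by
      rw [hA, Finset.mem_filter]
      exact ⟨Finset.mem_univ _, hrema0⟩
    have hCeq : hCount β ω x n = hAdm β x (extF a0) n := by
      unfold hCount hAdm
      congr 1
      refine Finset.filter_congr fun i hi => ?_
      rw [Finset.mem_range] at hi
      have heq : remSeq β x (extF a0) i = ((Kmap β)^[i] (ω, x)).2 := by
        rw [remSeq_congr fun j hj => hext j (lt_trans hj hi), remSeq_aDig (ω, x) i]
      rw [heq]
    rw [Finset.sum_eq_single_of_mem a0 ha0A ?side]
    · rw [Set.indicator_of_mem ha0C, hCeq]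
    case side =>
      intro a ha hne
      refine Set.indicator_of_notMem ?_ _
      intro hωa
      apply hne
      funext i
      have h1 := hωa (i : ℕ) i.isLt
      have h2 : extF a (i : ℕ) = a i := by rw [extF, dif_pos i.isLt]
      rw [← h2, ← h1]
  rw [funeq, integral_finset_sum A (fun a ha => (integrable_const _).indicator (key a ha).1)]
  have hterm : ∀ a ∈ A, (∫ ω, (C a).indicator
      (fun _ => (2:ℝ) ^ (hAdm β x (extF a) n)) ω ∂m) = 1 := by
    intro a ha
    rw [integral_indicator_const _ (key a ha).1, smul_eq_mul, measureReal_def, (key a ha).2,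
      ← mul_pow]
    norm_num
  rw [Finset.sum_congr rfl hterm, Finset.sum_const, nsmul_eq_mul, mul_one, hNA]

/-- `𝒩ₙ(x;β) = ∫_Ω 2^{h(ω,x,n)} dm(ω)` where
`h(ω,x,n) = #{0 ≤ i ≤ n-1 : π₂(K_β^i(ω,x)) ∈ S}`. -/
theorem stmt17 (β : ℝ) (hβ : 1 < β ∧ β < 2) (m : Measure (ℕ → Bool))
    (hm : IsBernoulliHalf m) (x : ℝ) (hx : x ∈ Ibeta β) (n : ℕ) :
    (Ncount β x n : ℝ) = ∫ ω, (2 : ℝ) ^ (hCount β ω x n) ∂m := by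
  exact stmt17' β hβ m hm x hx n

end RandomBeta
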